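/- Let f(x,v) = Σ_{n=0}^{N_L−1} C_n(x)·φ_n(v) with φ_n the rescaled Legendre basis on [v_a, v_b], and let (BC)_n(x) = Σ_{i=0}^{n−1} σ_{n,i}·C_i(x) with σ_{n,i} the derivative coefficients, so that dφ_n/dv = Σ_{i<n} σ_{n,i} φ_i. Then for every x, Σ_{n=0}^{N_L−1} C_n(x)·(BC)_n(x) = (1/(2(v_b−v_a)))·( f(x,v_b)² − f(x,v_a)² ). -/

import Mathlib

open MeasureTheory Finset

noncomputable def Leg : ℕ → ℝ → ℝ
  | 0 => fun _ => 1
  | 1 => fun x => x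
  | n + 2 => fun x =>
      ((2 * (n : ℝ) + 3) * x * Leg (n + 1) x - ((n : ℝ) + 1) * Leg n x) / ((n : ℝ) + 2)

/-- Rescaled Legendre basis on `[va, vb]`. -/
noncomputable def phi (va vb : ℝ) (n : ℕ) (v : ℝ) : ℝ :=
  Real.sqrt (2 * n + 1) * Leg n ((2 * v - (va + vb)) / (vb - va))

/-- The recursion coefficients `σ_n`. -/
noncomputable def sigma (va vb : ℝ) (n : ℕ) : ℝ :=
  if n = 0 then 0
  else (vb - va) / 2 * n / Real.sqrt ((2 * (n : ℝ) + 1) * (2 * (n : ℝ) - 1))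

/-- The coefficient `σ̄ = (va+vb)/2`. -/
noncomputable def sigmaBar (va vb : ℝ) : ℝ := (va + vb) / 2

/-- The derivative coefficients `σ_{n,i}`. -/
noncomputable def sigma' (va vb : ℝ) (n i : ℕ) : ℝ :=
  (if (n - i) % 2 = 1 then 1 else 0) * 2 *
    Real.sqrt ((2 * (n : ℝ) + 1) * (2 * (i : ℝ) + 1)) / (vb - va)

/-- Fourier basis `ψ_k(x) = exp(2πikx/L)` on `[0, L]`. -/
noncomputable def psi (L : ℝ) (k : ℤ) (x : ℝ) : ℂ :=
  Complex.exp (2 * (Real.pi : ℂ) * Complex.I * (k : ℂ) * (x : ℂ) / (L : ℂ))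

lemma leg_one_aux : ∀ n, Leg n 1 = 1 ∧ Leg (n + 1) 1 = 1 := by
  intro n
  induction n with
  | zero => exact ⟨rfl, rfl⟩
  | succ n ih =>
    refine ⟨ih.2, ?_⟩
    show Leg (n + 2) 1 = 1
    have h2 : ((n : ℝ) + 2) ≠ 0 := by positivity
    simp only [Leg, ih.1, ih.2]
    field_simp
    ring

lemma leg_one (n : ℕ) : Leg n 1 = 1 := (leg_one_aux n).1

lemma leg_negone_aux : ∀ n, Leg n (-1) = (-1 : ℝ) ^ n ∧ Leg (n + 1) (-1) = (-1 : ℝ) ^ (n + 1) := by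
  intro n
  induction n with
  | zero => exact ⟨rfl, by simp [Leg]⟩
  | succ n ih =>
    refine ⟨ih.2, ?_⟩
    show Leg (n + 2) (-1) = (-1 : ℝ) ^ (n + 2)
    have h2 : ((n : ℝ) + 2) ≠ 0 := by positivity
    simp only [Leg, ih.1, ih.2]
    field_simp
    ring

lemma leg_negone (n : ℕ) : Leg n (-1) = (-1 : ℝ) ^ n := (leg_negone_aux n).1

lemma ind_eq (n i : ℕ) (hin : i ≤ n) :
    (if (n - i) % 2 = 1 then (1 : ℝ) else 0) = (1 - (-1 : ℝ) ^ n * (-1 : ℝ) ^ i) / 2 := by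
  have hpow : (-1 : ℝ) ^ n * (-1 : ℝ) ^ i = (-1 : ℝ) ^ (n - i) := by
    have hn : (-1 : ℝ) ^ n = (-1 : ℝ) ^ (n - i) * (-1 : ℝ) ^ i := by
      rw [← pow_add, Nat.sub_add_cancel hin]
    rw [hn, mul_assoc, ← pow_add, ← two_mul, pow_mul, neg_one_sq, one_pow, mul_one]
  rw [hpow]
  rcases Nat.even_or_odd (n - i) with he | ho
  · rw [he.neg_one_pow]
    simp [Nat.even_iff.mp he]
  · rw [ho.neg_one_pow]
    simp [Nat.odd_iff.mp ho]

theorem C_dot_BC_eq_boundary (va vb : ℝ) (h : va < vb) (NL : ℕ)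
    (C : ℕ → ℝ → ℝ) (x : ℝ) :
    ∑ n ∈ Finset.range NL, C n x * (∑ i ∈ Finset.range n, sigma' va vb n i * C i x) =
      1 / (2 * (vb - va)) *
        ((∑ n ∈ Finset.range NL, C n x * phi va vb n vb) ^ 2
          - (∑ n ∈ Finset.range NL, C n x * phi va vb n va) ^ 2) := by
  have hba : vb - va ≠ 0 := sub_ne_zero.2 h.ne'
  have hphib : ∀ n : ℕ, phi va vb n vb = Real.sqrt (2 * n + 1) := by
    intro n
    unfold phi
    have h1 : (2 * vb - (va + vb)) / (vb - va) = 1 := by field_simp; ring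
    rw [h1, leg_one, mul_one]
  have hphia : ∀ n : ℕ, phi va vb n va = (-1 : ℝ) ^ n * Real.sqrt (2 * n + 1) := by
    intro n
    unfold phi
    have h1 : (2 * va - (va + vb)) / (vb - va) = -1 := by field_simp; ring
    rw [h1, leg_negone]
    ring
  simp only [hphib, hphia]
  induction NL with
  | zero => simp
  | succ N ih =>
    rw [Finset.sum_range_succ, Finset.sum_range_succ, Finset.sum_range_succ, ih]
    have hinner : C N x * (∑ i ∈ Finset.range N, sigma' va vb N i * C i x)
        = (C N x * Real.sqrt (2 * N + 1)) *
          ((∑ n ∈ Finset.range N, C n x * Real.sqrt (2 * n + 1))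
            - (-1 : ℝ) ^ N *
              ∑ n ∈ Finset.range N, C n x * ((-1 : ℝ) ^ n * Real.sqrt (2 * n + 1))) / (vb - va) := by
      rw [Finset.mul_sum]
      have hterm : ∀ i ∈ Finset.range N, C N x * (sigma' va vb N i * C i x)
          = (1 - (-1 : ℝ) ^ N * (-1 : ℝ) ^ i) * (C N x * Real.sqrt (2 * N + 1)) *
            (C i x * Real.sqrt (2 * i + 1)) / (vb - va) := by
        intro i hi
        have hin : i ≤ N := le_of_lt (Finset.mem_range.mp hi)
        unfold sigma'
        rw [ind_eq N i hin, Real.sqrt_mul (by positivity)]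
        field_simp
      rw [Finset.sum_congr rfl hterm]
      conv_rhs => rw [Finset.mul_sum, ← Finset.sum_sub_distrib, Finset.mul_sum, Finset.sum_div]
      refine Finset.sum_congr rfl fun i _ => ?_
      field_simp
    rw [hinner]
    rcases Nat.even_or_odd N with he | ho
    · simp only [he.neg_one_pow]
      field_simp
      ring
    · simp only [ho.neg_one_pow]
      field_simp
      ring
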